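/- arXiv:2404.17303 — 2 statements merged into one kernel-verified Lean document; each statement's English description precedes it below -/
import Mathlib

section
/- Let π : H → B be a partial representation of a Hopf algebra H on a unital algebra B, and for h ∈ H write ε^π_h := π(h₍₁₎)π(S(h₍₂₎)) ∈ B. Then for every h ∈ H one has ε^π_h = ε^π_{h₍₁₎} ε^π_{h₍₂₎}. -/
open TensorProduct

noncomputable section

variable {k : Type*} [Field k]
variable {H : Type*} [Ring H] [HopfAlgebra k H]
variable {B : Type*} [Ring B] [Algebra k B]

/-- The map `h ↦ ε^π_h = π(h₍₁₎)π(S(h₍₂₎))`, as a linear map `H →ₗ[k] B`. -/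
def epsPi (π : H →ₗ[k] B) : H →ₗ[k] B :=
  LinearMap.mul' k B ∘ₗ
    TensorProduct.map π (π ∘ₗ HopfAlgebra.antipode (R := k)) ∘ₗ Coalgebra.comul

/-- A partial representation of a Hopf algebra `H` on a unital algebra `B`. -/
structure IsPartialRep (π : H →ₗ[k] B) : Prop where
  map_one : π 1 = 1
  pr2 : ∀ h : H,
    LinearMap.mulLeft k (π h) ∘ₗ epsPi π =
      LinearMap.mul' k B ∘ₗ
        TensorProduct.map (π ∘ₗ LinearMap.mulLeft k h)
          (π ∘ₗ HopfAlgebra.antipode (R := k)) ∘ₗ Coalgebra.comul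
  pr3 : ∀ g : H,
    LinearMap.mulRight k (π g) ∘ₗ epsPi π =
      LinearMap.mul' k B ∘ₗ
        TensorProduct.map π
          (π ∘ₗ LinearMap.mulRight k g ∘ₗ HopfAlgebra.antipode (R := k)) ∘ₗ Coalgebra.comul

namespace EpsPiAux

open Coalgebra HopfAlgebra

lemma epsPi_repr (π : H →ₗ[k] B) (h : H) (r : Coalgebra.Repr k h (H × H)) :
    epsPi π h = ∑ i ∈ r.index,
      π (r.left i) * π (antipode (R := k) (r.right i)) := by
  simp only [epsPi, LinearMap.comp_apply, ← r.eq, map_sum]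
  simp

lemma counit_smul_repr (h : H) (r : Coalgebra.Repr k h (H × H)) :
    ∑ i ∈ r.index, (Coalgebra.counit (R := k) (r.right i)) • r.left i = h := by
  have := Coalgebra.sum_tmul_counit_eq (R := k) r
  apply_fun (TensorProduct.rid k H) at this
  rw [map_sum] at this
  simp only [rid_tmul] at this
  simpa using this

lemma trilinear_coassoc (F : H ⊗[k] (H ⊗[k] H) →ₗ[k] B) {h : H} (r : Coalgebra.Repr k h (H × H))
    (a₁ : ∀ i, Coalgebra.Repr k (r.left i) (H × H)) (a₂ : ∀ i, Coalgebra.Repr k (r.right i) (H × H)) :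
    ∑ i ∈ r.index, ∑ j ∈ (a₁ i).index,
      F ((a₁ i).left j ⊗ₜ ((a₁ i).right j ⊗ₜ r.right i)) =
    ∑ i ∈ r.index, ∑ j ∈ (a₂ i).index,
      F (r.left i ⊗ₜ ((a₂ i).left j ⊗ₜ (a₂ i).right j)) := by
  have := Coalgebra.sum_tmul_tmul_eq (R := k) r a₁ a₂
  apply_fun F at this
  simpa [map_sum] using this

lemma pr3_repr (π : H →ₗ[k] B) (hπ : IsPartialRep π) (h g : H) (r : Coalgebra.Repr k h (H × H)) :
    epsPi π h * π g = ∑ i ∈ r.index,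
      π (r.left i) * π (antipode (R := k) (r.right i) * g) := by
  have := LinearMap.congr_fun (hπ.pr3 g) h
  simp only [LinearMap.comp_apply, LinearMap.mulRight_apply] at this
  rw [this, ← r.eq, map_sum]
  simp

lemma pi_antipode_mul_repr (π : H →ₗ[k] B) (hπ : IsPartialRep π) (x : H)
    (r : Coalgebra.Repr k x (H × H)) :
    ∑ i ∈ r.index, π (antipode (R := k) (r.left i) * r.right i) =
      (Coalgebra.counit (R := k) x) • (1 : B) := by
  rw [← map_sum, HopfAlgebra.sum_antipode_mul_eq_smul, map_smul, hπ.map_one]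

/-- `x ⊗ (y ⊗ z) ↦ ε^π_x * (π y * π (S z))`. -/
def F1 (π : H →ₗ[k] B) : H ⊗[k] (H ⊗[k] H) →ₗ[k] B :=
  LinearMap.mul' k B ∘ₗ (LinearMap.mul' k B).lTensor B ∘ₗ
    TensorProduct.map (epsPi π)
      (TensorProduct.map π (π ∘ₗ HopfAlgebra.antipode (R := k)))

@[simp] lemma F1_tmul (π : H →ₗ[k] B) (x y z : H) :
    F1 π (x ⊗ₜ (y ⊗ₜ z)) = epsPi π x * (π y * π (antipode (R := k) z)) := by
  simp [F1]

/-- `x ⊗ (y ⊗ z) ↦ (π x * π (S y * z)) * c`. -/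
def F2 (π : H →ₗ[k] B) (c : B) : H ⊗[k] (H ⊗[k] H) →ₗ[k] B :=
  LinearMap.mulRight k c ∘ₗ LinearMap.mul' k B ∘ₗ
    TensorProduct.map π
      (π ∘ₗ LinearMap.mul' k H ∘ₗ (HopfAlgebra.antipode (R := k)).rTensor H)

@[simp] lemma F2_tmul (π : H →ₗ[k] B) (c : B) (x y z : H) :
    F2 π c (x ⊗ₜ (y ⊗ₜ z)) = (π x * π (antipode (R := k) y * z)) * c := by
  simp [F2]

lemma key (π : H →ₗ[k] B) (hπ : IsPartialRep π) (h : H) (r : Coalgebra.Repr k h (H × H))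
    (ra : ∀ i, Coalgebra.Repr k (r.left i) (H × H)) (rb : ∀ i, Coalgebra.Repr k (r.right i) (H × H))
    (rp : ∀ i l, Coalgebra.Repr k ((ra i).left l) (H × H))
    (rq : ∀ i l, Coalgebra.Repr k ((ra i).right l) (H × H)) :
    ∑ i ∈ r.index, epsPi π (r.left i) * epsPi π (r.right i) = epsPi π h := by
  calc
    ∑ i ∈ r.index, epsPi π (r.left i) * epsPi π (r.right i)
        = ∑ i ∈ r.index, ∑ j ∈ (rb i).index,
            F1 π (r.left i ⊗ₜ ((rb i).left j ⊗ₜ (rb i).right j)) := by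
          refine Finset.sum_congr rfl fun i _ => ?_
          rw [epsPi_repr π _ (rb i), Finset.mul_sum]
          simp [mul_assoc]
    _ = ∑ i ∈ r.index, ∑ l ∈ (ra i).index,
            F1 π ((ra i).left l ⊗ₜ ((ra i).right l ⊗ₜ r.right i)) :=
          (trilinear_coassoc (F1 π) r ra rb).symm
    _ = ∑ i ∈ r.index, ∑ l ∈ (ra i).index, ∑ m ∈ (rp i l).index,
            F2 π (π (antipode (R := k) (r.right i)))
              ((rp i l).left m ⊗ₜ ((rp i l).right m ⊗ₜ (ra i).right l)) := by
          refine Finset.sum_congr rfl fun i _ => Finset.sum_congr rfl fun l _ => ?_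
          rw [F1_tmul, ← mul_assoc,
            pr3_repr π hπ _ _ (rp i l), Finset.sum_mul]
          simp
    _ = ∑ i ∈ r.index, ∑ l ∈ (ra i).index, ∑ m ∈ (rq i l).index,
            F2 π (π (antipode (R := k) (r.right i)))
              ((ra i).left l ⊗ₜ ((rq i l).left m ⊗ₜ (rq i l).right m)) := by
          refine Finset.sum_congr rfl fun i _ => ?_
          exact trilinear_coassoc (F2 π (π (antipode (R := k) (r.right i))))
            (ra i) (rp i) (rq i)
    _ = ∑ i ∈ r.index, π (r.left i) * π (antipode (R := k) (r.right i)) := by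
          refine Finset.sum_congr rfl fun i _ => ?_
          have : ∀ l ∈ (ra i).index,
              ∑ m ∈ (rq i l).index,
                F2 π (π (antipode (R := k) (r.right i)))
                  ((ra i).left l ⊗ₜ ((rq i l).left m ⊗ₜ (rq i l).right m)) =
              ((Coalgebra.counit (R := k) ((ra i).right l)) • π ((ra i).left l)) *
                π (antipode (R := k) (r.right i)) := by
            intro l _
            simp only [F2_tmul]
            rw [← Finset.sum_mul, ← Finset.mul_sum,
              pi_antipode_mul_repr π hπ _ (rq i l)]
            rw [mul_smul_comm, mul_one, smul_mul_assoc]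
          rw [Finset.sum_congr rfl this, ← Finset.sum_mul]
          congr 1
          simp only [← map_smul, ← map_sum]
          rw [counit_smul_repr (r.left i) (ra i)]
    _ = epsPi π h := (epsPi_repr π h r).symm

end EpsPiAux

/-- for a partial representation `π`, one has
`ε^π_h = ε^π_{h₍₁₎} ε^π_{h₍₂₎}` for every `h ∈ H` (as an equality of linear maps in `h`). -/
theorem epsPi_eq_mul_epsPi_epsPi (π : H →ₗ[k] B) (hπ : IsPartialRep π) :
    epsPi π =
      LinearMap.mul' k B ∘ₗ TensorProduct.map (epsPi π) (epsPi π) ∘ₗ Coalgebra.comul := by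
  apply LinearMap.ext
  intro h
  simp only [LinearMap.comp_apply]
  rw [← (Coalgebra.Repr.arbitrary k h).eq, map_sum, map_sum]
  simp only [TensorProduct.map_tmul, LinearMap.mul'_apply]
  exact (EpsPiAux.key π hπ h (Coalgebra.Repr.arbitrary k h)
    (fun i => Coalgebra.Repr.arbitrary k _) (fun i => Coalgebra.Repr.arbitrary k _)
    (fun i l => Coalgebra.Repr.arbitrary k _) (fun i l => Coalgebra.Repr.arbitrary k _)).symm
end
end

section
/- Let π : H → B be a partial representation of a Hopf algebra H on a unital algebra B. Then π is a global representation (i.e. an algebra homomorphism) if and only if π(h₍₁₎)π(S(h₍₂₎)) = ε(h)1_B for all h ∈ H. -/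
open TensorProduct

noncomputable section

variable {k : Type*} [Field k]
variable {H : Type*} [Ring H] [HopfAlgebra k H]
variable {B : Type*} [Ring B] [Algebra k B]

lemma epsPi_apply_repr (π : H →ₗ[k] B) {x : H} {ι : Type*} (r : Coalgebra.Repr k x ι) :
    epsPi π x = ∑ i ∈ r.index, π (r.left i) * π (HopfAlgebra.antipode (R := k) (r.right i)) := by
  rw [epsPi]
  simp only [LinearMap.comp_apply, ← r.eq, map_sum, TensorProduct.map_tmul,
    LinearMap.mul'_apply]

lemma counit_smul_sum_left {g : H} {ι : Type*} (r : Coalgebra.Repr k g ι) :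
    ∑ i ∈ r.index, Coalgebra.counit (R := k) (r.left i) • r.right i = g := by
  have h1 := congrArg (TensorProduct.lid k H) (Coalgebra.sum_counit_tmul_eq r)
  rw [map_sum] at h1
  simp only [TensorProduct.lid_tmul, one_smul] at h1
  exact h1

lemma counit_smul_sum_right {g : H} {ι : Type*} (r : Coalgebra.Repr k g ι) :
    ∑ i ∈ r.index, Coalgebra.counit (R := k) (r.right i) • r.left i = g := by
  have h1 := congrArg (TensorProduct.rid k H) (Coalgebra.sum_tmul_counit_eq r)
  rw [map_sum] at h1
  simp only [TensorProduct.rid_tmul, one_smul] at h1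
  exact h1

/-- a partial representation `π : H → B` is a global representation
(an algebra homomorphism) if and only if `π(h₍₁₎)π(S(h₍₂₎)) = ε(h)1_B` for all `h ∈ H`. -/
theorem partialRep_global_iff (π : H →ₗ[k] B) (hπ : IsPartialRep π) :
    (∀ g h : H, π (g * h) = π g * π h) ↔
      ∀ h : H, epsPi π h = algebraMap k B (Coalgebra.counit h) := by
  constructor
  · intro hmul h
    set r := Coalgebra.Repr.arbitrary k h with hr
    calc epsPi π h
        = ∑ i ∈ r.index, π (r.left i) * π (HopfAlgebra.antipode (R := k) (r.right i)) :=
          epsPi_apply_repr π r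
      _ = ∑ i ∈ r.index, π (r.left i * HopfAlgebra.antipode (R := k) (r.right i)) := by
          exact Finset.sum_congr rfl fun i _ => (hmul _ _).symm
      _ = π (∑ i ∈ r.index, r.left i * HopfAlgebra.antipode (R := k) (r.right i)) :=
          (map_sum π _ _).symm
      _ = π (algebraMap k H (Coalgebra.counit h)) := by
          rw [HopfAlgebra.sum_mul_antipode_eq_algebraMap_counit r]
      _ = algebraMap k B (Coalgebra.counit h) := by
          rw [Algebra.algebraMap_eq_smul_one, map_smul, hπ.map_one,
            ← Algebra.algebraMap_eq_smul_one]
  · intro heps g h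
    set S := HopfAlgebra.antipode (R := k) (A := H) with hS
    set r := Coalgebra.Repr.arbitrary k g with hr
    set r2 : ∀ i : r.ι, Coalgebra.Repr k (r.left i) (H × H) :=
      fun i => Coalgebra.Repr.arbitrary k (r.left i) with hr2
    set r3 : ∀ i : r.ι, Coalgebra.Repr k (r.right i) (H × H) :=
      fun i => Coalgebra.Repr.arbitrary k (r.right i) with hr3
    -- the evaluation map T(x ⊗ (y ⊗ z)) = π x * π (S y * z * h)
    set T : H ⊗[k] (H ⊗[k] H) →ₗ[k] B :=
      LinearMap.mul' k B ∘ₗ TensorProduct.map π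
        (π ∘ₗ LinearMap.mulRight k h ∘ₗ LinearMap.mul' k H ∘ₗ
          TensorProduct.map (HopfAlgebra.antipode (R := k)) LinearMap.id) with hT
    have hTapp : ∀ x y z : H, T (x ⊗ₜ[k] (y ⊗ₜ[k] z)) = π x * π (S y * z * h) := by
      intro x y z
      simp [hT, hS]
    have step1 : π (g * h) =
        ∑ i ∈ r.index, epsPi π (r.left i) * π (r.right i * h) := by
      calc π (g * h)
          = π ((∑ i ∈ r.index, Coalgebra.counit (R := k) (r.left i) • r.right i) * h) := by
            rw [counit_smul_sum_left r]
        _ = ∑ i ∈ r.index, Coalgebra.counit (R := k) (r.left i) • π (r.right i * h) := by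
            rw [Finset.sum_mul, map_sum]
            exact Finset.sum_congr rfl fun i _ => by rw [smul_mul_assoc, map_smul]
        _ = ∑ i ∈ r.index, epsPi π (r.left i) * π (r.right i * h) := by
            refine Finset.sum_congr rfl fun i _ => ?_
            rw [heps, Algebra.smul_def]
    have step2 : ∀ i ∈ r.index, epsPi π (r.left i) * π (r.right i * h) =
        ∑ j ∈ (r2 i).index,
          π ((r2 i).left j) * π (S ((r2 i).right j) * r.right i * h) := by
      intro i _
      have h3 := LinearMap.congr_fun (hπ.pr3 (r.right i * h)) (r.left i)
      simp only [LinearMap.comp_apply, LinearMap.mulRight_apply] at h3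
      rw [h3, ← (r2 i).eq, map_sum, map_sum]
      refine Finset.sum_congr rfl fun j _ => ?_
      simp [hS, mul_assoc]
    have inner : ∀ i : r.ι, ∑ j ∈ (r3 i).index,
        π (S ((r3 i).left j) * (r3 i).right j * h) =
          Coalgebra.counit (R := k) (r.right i) • π h := by
      intro i
      calc ∑ j ∈ (r3 i).index, π (S ((r3 i).left j) * (r3 i).right j * h)
          = π ((∑ j ∈ (r3 i).index, S ((r3 i).left j) * (r3 i).right j) * h) := by
            rw [Finset.sum_mul, map_sum]
        _ = π (algebraMap k H (Coalgebra.counit (R := k) (r.right i)) * h) := by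
            rw [hS, HopfAlgebra.sum_antipode_mul_eq_algebraMap_counit (r3 i)]
        _ = Coalgebra.counit (R := k) (r.right i) • π h := by
            rw [← Algebra.smul_def, map_smul]
    have hcoassoc := congrArg T (Coalgebra.sum_tmul_tmul_eq r r2 r3)
    simp only [map_sum, hTapp] at hcoassoc
    calc π (g * h)
        = ∑ i ∈ r.index, epsPi π (r.left i) * π (r.right i * h) := step1
      _ = ∑ i ∈ r.index, ∑ j ∈ (r2 i).index,
            π ((r2 i).left j) * π (S ((r2 i).right j) * r.right i * h) :=
          Finset.sum_congr rfl step2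
      _ = ∑ i ∈ r.index, ∑ j ∈ (r3 i).index,
            π (r.left i) * π (S ((r3 i).left j) * (r3 i).right j * h) := hcoassoc
      _ = ∑ i ∈ r.index, π (r.left i) * (Coalgebra.counit (R := k) (r.right i) • π h) := by
          refine Finset.sum_congr rfl fun i _ => ?_
          rw [← Finset.mul_sum, inner i]
      _ = (∑ i ∈ r.index, Coalgebra.counit (R := k) (r.right i) • π (r.left i)) * π h := by
          rw [Finset.sum_mul]
          exact Finset.sum_congr rfl fun i _ => by
            rw [mul_smul_comm, smul_mul_assoc]
      _ = π g * π h := by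
          have hsum : π g =
              ∑ i ∈ r.index, Coalgebra.counit (R := k) (r.right i) • π (r.left i) := by
            conv_lhs => rw [← counit_smul_sum_right r]
            rw [map_sum]
            exact Finset.sum_congr rfl fun i _ => map_smul π _ _
          rw [hsum]
end
end
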